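/- Let uv be a bridge of a connected simple graph G and let H and H′ be the two components of G − uv, both nontrivial (each having at least two vertices), with u ∈ H and v ∈ H′. Let G′ = σ(G,uv) be the graph obtained by identifying the vertices u and v into a single vertex u′ and attaching a new pendant vertex v′ adjacent to u′. Then ecc(G′) < ecc(G). -/

import Mathlib

open SimpleGraph

private lemma tri_dist {V : Type*} (G : SimpleGraph V) {a b c : V}
    (h1 : G.Reachable a b) (h2 : G.Reachable b c) :
    G.dist a c ≤ G.dist a b + G.dist b c := by
  obtain ⟨p, hp⟩ := h1.exists_walk_length_eq_dist
  obtain ⟨q, hq⟩ := h2.exists_walk_length_eq_dist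
  rw [← hp, ← hq, ← Walk.length_append]
  exact dist_le _

private lemma split_walk {V : Type*} (G : SimpleGraph V) (u v : V) {x y : V}
    (p : G.Walk x y) (hp : p.IsPath) :
    (∀ e ∈ p.edges, e ∉ ({s(u, v)} : Set (Sym2 V))) ∨
    (∃ q : (G.deleteEdges {s(u, v)}).Walk x u, ∃ r : (G.deleteEdges {s(u, v)}).Walk v y,
      q.length + 1 + r.length = p.length) ∨
    (∃ q : (G.deleteEdges {s(u, v)}).Walk x v, ∃ r : (G.deleteEdges {s(u, v)}).Walk u y,
      q.length + 1 + r.length = p.length) := by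
  induction p with
  | nil => left; simp
  | @cons x w y h p ih =>
    rw [Walk.cons_isPath_iff] at hp
    by_cases he : s(x, w) = s(u, v)
    · rw [Sym2.eq_iff] at he
      rcases he with ⟨rfl, rfl⟩ | ⟨rfl, rfl⟩
      · right; left
        refine ⟨Walk.nil, p.toDeleteEdges _ ?_, by simp; omega⟩
        intro e hep hes
        rw [Set.mem_singleton_iff] at hes
        subst hes
        exact hp.2 (p.fst_mem_support_of_mem_edges hep)
      · right; right
        refine ⟨Walk.nil, p.toDeleteEdges _ ?_, by simp; omega⟩
        intro e hep hes
        rw [Set.mem_singleton_iff] at hes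
        subst hes
        exact hp.2 (p.snd_mem_support_of_mem_edges hep)
    · have hS : (G.deleteEdges {s(u, v)}).Adj x w := by
        rw [deleteEdges_adj]
        exact ⟨h, by simpa using he⟩
      rcases ih hp.1 with h1 | ⟨q, r, hl⟩ | ⟨q, r, hl⟩
      · left
        intro e hee
        rw [Walk.edges_cons] at hee
        rcases List.mem_cons.mp hee with rfl | hee
        · simpa using he
        · exact h1 e hee
      · right; left
        exact ⟨Walk.cons hS q, r, by simp [← hl]; omega⟩
      · right; right
        exact ⟨Walk.cons hS q, r, by simp [← hl]; omega⟩

/-- The eccentricity of a vertex: the maximum distance from it to any other vertex. -/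
noncomputable def eccentricity {V : Type*} [Fintype V] (G : SimpleGraph V) (v : V) : ℕ :=
  Finset.univ.sup fun u => G.dist v u

/-- The average eccentricity of a graph. -/
noncomputable def avgEcc {V : Type*} [Fintype V] (G : SimpleGraph V) : ℝ :=
  (∑ v : V, (eccentricity G v : ℝ)) / (Fintype.card V : ℝ)

/-- The `σ`-transform `σ(G, uv)` of `G` at the bridge `uv`: identify `u` and `v` into a
single vertex (played by `u`) and attach a new pendant vertex (played by `v`) to it.
The vertex set is unchanged. -/
def sigmaTransform {V : Type*} (G : SimpleGraph V) (u v : V) : SimpleGraph V :=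
  SimpleGraph.fromRel (fun x y =>
    (x ≠ v ∧ y ≠ v ∧ (G.Adj x y ∨ (x = u ∧ G.Adj v y) ∨ (y = u ∧ G.Adj x v))) ∨
    (x = u ∧ y = v))

/-- If `uv` is a bridge of a connected graph `G` whose two components (of `G - uv`) are
both nontrivial, then `ecc (σ(G, uv)) < ecc G`. -/
theorem avgEcc_sigmaTransform_lt {V : Type*} [Fintype V] (G : SimpleGraph V) (u v : V)
    (hG : G.Connected) (hbridge : G.IsBridge s(u, v))
    (hH : ∃ x, x ≠ u ∧ (G.deleteEdges {s(u, v)}).Reachable u x)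
    (hH' : ∃ y, y ≠ v ∧ (G.deleteEdges {s(u, v)}).Reachable v y) :
    avgEcc (sigmaTransform G u v) < avgEcc G := by
  classical
  set S := G.deleteEdges {s(u, v)} with hS
  set G' := sigmaTransform G u v with hG'
  obtain ⟨huv, hnr⟩ : G.Adj u v ∧ ¬ S.Reachable u v :=
    ⟨hbridge.reachable_iff_adj.mp (hG u v), isBridge_iff.mp hbridge⟩
  have hnr' : ¬ S.Reachable u v := hnr
  have hune : u ≠ v := G.ne_of_adj huv
  -- the identification map
  set f : V → V := fun w => if w = v then u else w with hf
  have hfv : f v = u := by simp [hf]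
  have hfne : ∀ w, w ≠ v → f w = w := by intro w hw; simp [hf, hw]
  -- f is a graph homomorphism from S to G'
  have hhom : ∀ ⦃a b : V⦄, S.Adj a b → G'.Adj (f a) (f b) := by
    intro a b hab
    rw [hS, deleteEdges_adj, Set.mem_singleton_iff] at hab
    obtain ⟨hab, hne⟩ := hab
    by_cases ha : a = v
    · have hb : b ≠ v := by rintro rfl; rw [ha] at hab; exact G.loopless.irrefl _ hab
      have hbu : b ≠ u := by rintro rfl; rw [ha] at hne; exact hne Sym2.eq_swap
      rw [ha, hfv, hfne b hb]
      exact (fromRel_adj _ _ _).mpr ⟨hbu.symm, Or.inl (Or.inl ⟨hune, hb,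
        Or.inr (Or.inl ⟨rfl, by rw [← ha]; exact hab⟩)⟩)⟩
    · by_cases hb : b = v
      · have hau : a ≠ u := by rintro rfl; rw [hb] at hne; exact hne rfl
        rw [hb, hfv, hfne a ha]
        exact (fromRel_adj _ _ _).mpr ⟨hau, Or.inl (Or.inl ⟨ha, hune,
          Or.inr (Or.inr ⟨rfl, by rw [← hb]; exact hab⟩)⟩)⟩
      · rw [hfne a ha, hfne b hb]
        exact (fromRel_adj _ _ _).mpr ⟨G.ne_of_adj hab, Or.inl (Or.inl ⟨ha, hb, Or.inl hab⟩)⟩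
  let F : S →g G' := ⟨f, fun h => hhom h⟩
  have hfd : ∀ a b, S.Reachable a b → G'.dist (f a) (f b) ≤ S.dist a b := by
    intro a b hr
    obtain ⟨p, hl⟩ := hr.exists_walk_length_eq_dist
    calc G'.dist (f a) (f b) ≤ (p.map F).length := dist_le _
    _ = p.length := p.length_map F
    _ = S.dist a b := hl
  have hGadj' : G'.Adj u v := (fromRel_adj _ _ _).mpr ⟨hune, Or.inl (Or.inr ⟨rfl, rfl⟩)⟩
  have hduv' : G'.dist u v ≤ 1 := le_of_eq (dist_eq_one_iff_adj.mpr hGadj')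
  have hnotboth : ∀ w, S.Reachable u w → S.Reachable v w → False :=
    fun w h1 h2 => hnr' (h1.trans h2.symm)
  have hvnotu : ∀ w, S.Reachable u w → w ≠ v := fun w h hw => hnr' (hw ▸ h)
  have hunotv : ∀ w, S.Reachable v w → w ≠ u := fun w h hw => hnr' (hw ▸ h).symm
  have hpart : ∀ w, S.Reachable u w ∨ S.Reachable v w := by
    intro w
    obtain ⟨p, hp, hl⟩ := (hG u w).exists_path_of_dist
    rcases split_walk G u v p hp with h1 | ⟨q, r, _⟩ | ⟨q, r, _⟩
    · left; exact ⟨p.toDeleteEdges _ h1⟩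
    · right; exact ⟨r⟩
    · exact absurd ⟨q⟩ hnr'
  have hcross : ∀ x y, S.Reachable u x → S.Reachable v y →
      G.dist x y = S.dist x u + 1 + S.dist v y := by
    intro x y hx hy
    apply le_antisymm
    · obtain ⟨q, hq⟩ := hx.symm.exists_walk_length_eq_dist
      obtain ⟨r, hr⟩ := hy.exists_walk_length_eq_dist
      have hq' : ∀ e ∈ q.edges, e ∈ G.edgeSet :=
        fun e he => edgeSet_mono (G.deleteEdges_le _) (q.edges_subset_edgeSet he)
      have hr' : ∀ e ∈ r.edges, e ∈ G.edgeSet :=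
        fun e he => edgeSet_mono (G.deleteEdges_le _) (r.edges_subset_edgeSet he)
      have hle : G.dist x y ≤
          ((q.transfer G hq').append (Walk.cons huv (r.transfer G hr'))).length := dist_le _
      simp only [Walk.length_append, Walk.length_cons, Walk.length_transfer] at hle
      omega
    · obtain ⟨p, hp, hl⟩ := (hG x y).exists_path_of_dist
      rcases split_walk G u v p hp with h1 | ⟨q, r, hqr⟩ | ⟨q, r, hqr⟩
      · have hxy : S.Reachable x y := ⟨p.toDeleteEdges _ h1⟩
        exact absurd (hx.trans hxy) (fun h => hnotboth y h hy)
      · have h1 : S.dist x u ≤ q.length := dist_le q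
        have h2 : S.dist v y ≤ r.length := dist_le r
        omega
      · exact absurd (hx.trans ⟨q⟩) hnr'
  have hintraU : ∀ x z, S.Reachable u x → S.Reachable u z → G.dist x z = S.dist x z := by
    intro x z hx hz
    have hxz : S.Reachable x z := hx.symm.trans hz
    apply le_antisymm (hxz.dist_anti (deleteEdges_le _))
    obtain ⟨p, hp, hl⟩ := (hG x z).exists_path_of_dist
    rcases split_walk G u v p hp with h1 | ⟨q, r, hqr⟩ | ⟨q, r, hqr⟩
    · have h2 : S.dist x z ≤ (p.toDeleteEdges _ h1).length := dist_le _
      rw [Walk.length_transfer, hl] at h2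
      exact h2
    · exact absurd (⟨r⟩ : S.Reachable v z) (fun h => hnotboth z hz h)
    · exact absurd (hx.trans ⟨q⟩) hnr'
  have hintraV : ∀ x z, S.Reachable v x → S.Reachable v z → G.dist x z = S.dist x z := by
    intro x z hx hz
    have hxz : S.Reachable x z := hx.symm.trans hz
    apply le_antisymm (hxz.dist_anti (deleteEdges_le _))
    obtain ⟨p, hp, hl⟩ := (hG x z).exists_path_of_dist
    rcases split_walk G u v p hp with h1 | ⟨q, r, hqr⟩ | ⟨q, r, hqr⟩
    · have h2 : S.dist x z ≤ (p.toDeleteEdges _ h1).length := dist_le _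
      rw [Walk.length_transfer, hl] at h2
      exact h2
    · exact absurd ((hx.trans (⟨q⟩ : S.Reachable x u)).symm) hnr'
    · exact absurd (⟨r⟩ : S.Reachable u z) (fun h => hnotboth z h hz)
  have hreach' : ∀ w, G'.Reachable u w := by
    intro w
    rcases hpart w with h | h
    · have h2 : G'.Reachable (f u) (f w) := h.map F
      rwa [hfne u hune, hfne w (hvnotu w h)] at h2
    · by_cases hw : w = v
      · rw [hw]; exact hGadj'.reachable
      · have h2 : G'.Reachable (f v) (f w) := h.map F
        rwa [hfv, hfne w hw] at h2
  have hconn' : G'.Connected := by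
    rw [connected_iff]
    exact ⟨fun a b => (hreach' a).symm.trans (hreach' b), ⟨u⟩⟩
  have htri' : ∀ a b c : V, G'.dist a c ≤ G'.dist a b + G'.dist b c :=
    fun a b c => hconn'.dist_triangle
  -- convenient distance bounds in G'
  have hdq : ∀ a b, S.Reachable a b → a ≠ v → b ≠ v → G'.dist a b ≤ S.dist a b := by
    intro a b h ha hb
    have h2 := hfd a b h
    rwa [hfne a ha, hfne b hb] at h2
  have hdKu : ∀ b, S.Reachable v b → b ≠ v → G'.dist u b ≤ S.dist v b := by
    intro b h hb
    have h2 := hfd v b h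
    rwa [hfv, hfne b hb] at h2
  have hdKu' : ∀ b, S.Reachable v b → b ≠ v → G'.dist b u ≤ S.dist b v := by
    intro b h hb
    have h2 := hfd b v h.symm
    rwa [hfv, hfne b hb] at h2
  -- the two sides and their radii
  let Hs : Finset V := Finset.univ.filter (fun w => S.Reachable u w)
  let Ks : Finset V := Finset.univ.filter (fun w => S.Reachable v w)
  have hmemH : ∀ {w}, S.Reachable u w → w ∈ Hs :=
    fun h => Finset.mem_filter.mpr ⟨Finset.mem_univ _, h⟩
  have hmemK : ∀ {w}, S.Reachable v w → w ∈ Ks :=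
    fun h => Finset.mem_filter.mpr ⟨Finset.mem_univ _, h⟩
  set A := Hs.sup (fun w => S.dist u w) with hA
  set M := Ks.sup (fun w => S.dist v w) with hM
  have hAle : ∀ w, S.Reachable u w → S.dist u w ≤ A := fun w h => Finset.le_sup (hmemH h)
  have hMle : ∀ w, S.Reachable v w → S.dist v w ≤ M := fun w h => Finset.le_sup (hmemK h)
  obtain ⟨xs, hxsH, hxsA⟩ :=
    Finset.exists_mem_eq_sup Hs ⟨u, hmemH (Reachable.refl u)⟩ (fun w => S.dist u w)
  obtain ⟨ys, hysK, hysM⟩ :=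
    Finset.exists_mem_eq_sup Ks ⟨v, hmemK (Reachable.refl v)⟩ (fun w => S.dist v w)
  have hxsr : S.Reachable u xs := (Finset.mem_filter.mp hxsH).2
  have hysr : S.Reachable v ys := (Finset.mem_filter.mp hysK).2
  obtain ⟨x0, hx0u, hx0r⟩ := hH
  obtain ⟨y0, hy0v, hy0r⟩ := hH'
  have hA1 : 1 ≤ A := by
    have h1 := hAle x0 hx0r
    have h2 : 0 < S.dist u x0 := hx0r.pos_dist_of_ne (Ne.symm hx0u)
    omega
  have hM1 : 1 ≤ M := by
    have h1 := hMle y0 hy0r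
    have h2 : 0 < S.dist v y0 := hy0r.pos_dist_of_ne (Ne.symm hy0v)
    omega
  have hecc_ge : ∀ w z, G.dist w z ≤ eccentricity G w :=
    fun w z => Finset.le_sup (Finset.mem_univ z)
  have hecc'_ge : ∀ w z, G'.dist w z ≤ eccentricity G' w :=
    fun w z => Finset.le_sup (Finset.mem_univ z)
  -- every vertex other than u, v has no larger eccentricity in G'
  have hboundH : ∀ w, S.Reachable u w → ∀ z, G'.dist w z ≤ eccentricity G w := by
    intro w hw z
    have hwv : w ≠ v := hvnotu w hw
    rcases hpart z with hz | hz
    · have h1 : G'.dist w z ≤ S.dist w z := hdq w z (hw.symm.trans hz) hwv (hvnotu z hz)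
      have h2 : G.dist w z = S.dist w z := hintraU w z hw hz
      have h3 := hecc_ge w z
      omega
    · by_cases hzv : z = v
      · rw [hzv]
        have h1 : G'.dist w v ≤ G'.dist w u + G'.dist u v := htri' w u v
        have h2 : G'.dist w u ≤ S.dist w u := hdq w u hw.symm hwv hune
        have h3 : G.dist w v = S.dist w u + 1 + S.dist v v := hcross w v hw (Reachable.refl v)
        have h4 : S.dist v v = 0 := SimpleGraph.dist_self
        have h5 := hecc_ge w v
        omega
      · have h1 := htri' w u z
        have h2 : G'.dist w u ≤ S.dist w u := hdq w u hw.symm hwv hune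
        have h3 : G'.dist u z ≤ S.dist v z := hdKu z hz hzv
        have h4 : G.dist w z = S.dist w u + 1 + S.dist v z := hcross w z hw hz
        have h5 := hecc_ge w z
        omega
  have hboundK : ∀ w, S.Reachable v w → w ≠ v → ∀ z, G'.dist w z ≤ eccentricity G w := by
    intro w hw hwv z
    rcases hpart z with hz | hz
    · have h1 := htri' w u z
      have h2 : G'.dist w u ≤ S.dist w v := hdKu' w hw hwv
      have h3 : G'.dist u z ≤ S.dist u z := hdq u z hz hune (hvnotu z hz)
      have h4 : G.dist z w = S.dist z u + 1 + S.dist v w := hcross z w hz hw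
      have h5 := hecc_ge w z
      have h6 : G.dist w z = G.dist z w := SimpleGraph.dist_comm
      have h7 : S.dist z u = S.dist u z := SimpleGraph.dist_comm
      have h8 : S.dist v w = S.dist w v := SimpleGraph.dist_comm
      omega
    · by_cases hzv : z = v
      · rw [hzv]
        have h1 := htri' w u v
        have h2 : G'.dist w u ≤ S.dist w v := hdKu' w hw hwv
        have h3 : G.dist u w = S.dist u u + 1 + S.dist v w := hcross u w (Reachable.refl u) hw
        have h4 : S.dist u u = 0 := SimpleGraph.dist_self
        have h5 := hecc_ge w u
        have h6 : G.dist w u = G.dist u w := SimpleGraph.dist_comm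
        have h8 : S.dist v w = S.dist w v := SimpleGraph.dist_comm
        omega
      · have h1 : G'.dist w z ≤ S.dist w z := hdq w z (hw.symm.trans hz) hwv hzv
        have h2 : G.dist w z = S.dist w z := hintraV w z hw hz
        have h3 := hecc_ge w z
        omega
  -- a vertex with strictly smaller eccentricity
  have hstrict : ∃ w0, w0 ≠ u ∧ w0 ≠ v ∧ eccentricity G' w0 < eccentricity G w0 := by
    by_cases hAM : M ≤ A
    · refine ⟨ys, hunotv ys hysr, ?_, ?_⟩
      · intro h
        rw [h] at hysM
        rw [SimpleGraph.dist_self] at hysM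
        omega
      · have hysv : ys ≠ v := by
          intro h; rw [h, SimpleGraph.dist_self] at hysM; omega
        have hB : A + 1 + M ≤ eccentricity G ys := by
          have h4 : G.dist xs ys = S.dist xs u + 1 + S.dist v ys := hcross xs ys hxsr hysr
          have h5 := hecc_ge ys xs
          have h6 : G.dist ys xs = G.dist xs ys := SimpleGraph.dist_comm
          have h7 : S.dist xs u = S.dist u xs := SimpleGraph.dist_comm
          omega
        have hup : eccentricity G' ys ≤ A + M := by
          apply Finset.sup_le
          intro z _
          rcases hpart z with hz | hz
          · have h1 := htri' ys u z
            have h2 : G'.dist ys u ≤ S.dist ys v := hdKu' ys hysr hysv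
            have h3 : G'.dist u z ≤ S.dist u z := hdq u z hz hune (hvnotu z hz)
            have h4 := hAle z hz
            have h5 : S.dist ys v = S.dist v ys := SimpleGraph.dist_comm
            omega
          · by_cases hzv : z = v
            · rw [hzv]
              have h1 := htri' ys u v
              have h2 : G'.dist ys u ≤ S.dist ys v := hdKu' ys hysr hysv
              have h5 : S.dist ys v = S.dist v ys := SimpleGraph.dist_comm
              omega
            · have h1 : G'.dist ys z ≤ S.dist ys z := hdq ys z (hysr.symm.trans hz) hysv hzv
              have h2 : S.dist ys z ≤ S.dist ys v + S.dist v z := tri_dist S hysr.symm hz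
              have h3 := hMle z hz
              have h5 : S.dist ys v = S.dist v ys := SimpleGraph.dist_comm
              omega
        omega
    · push_neg at hAM
      refine ⟨xs, ?_, hvnotu xs hxsr, ?_⟩
      · intro h
        rw [h, SimpleGraph.dist_self] at hxsA
        omega
      · have hxsu : xs ≠ u := by
          intro h; rw [h, SimpleGraph.dist_self] at hxsA; omega
        have hB : A + 1 + M ≤ eccentricity G xs := by
          have h4 : G.dist xs ys = S.dist xs u + 1 + S.dist v ys := hcross xs ys hxsr hysr
          have h5 := hecc_ge xs ys
          have h7 : S.dist xs u = S.dist u xs := SimpleGraph.dist_comm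
          omega
        have hup : eccentricity G' xs ≤ A + M := by
          apply Finset.sup_le
          intro z _
          rcases hpart z with hz | hz
          · have h1 : G'.dist xs z ≤ S.dist xs z :=
              hdq xs z (hxsr.symm.trans hz) (hvnotu xs hxsr) (hvnotu z hz)
            have h2 : S.dist xs z ≤ S.dist xs u + S.dist u z := tri_dist S hxsr.symm hz
            have h3 := hAle z hz
            have h7 : S.dist xs u = S.dist u xs := SimpleGraph.dist_comm
            omega
          · by_cases hzv : z = v
            · rw [hzv]
              have h1 := htri' xs u v
              have h2 : G'.dist xs u ≤ S.dist xs u := hdq xs u hxsr.symm (hvnotu xs hxsr) hune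
              have h7 : S.dist xs u = S.dist u xs := SimpleGraph.dist_comm
              omega
            · have h1 := htri' xs u z
              have h2 : G'.dist xs u ≤ S.dist xs u := hdq xs u hxsr.symm (hvnotu xs hxsr) hune
              have h3 : G'.dist u z ≤ S.dist v z := hdKu z hz hzv
              have h4 := hMle z hz
              have h7 : S.dist xs u = S.dist u xs := SimpleGraph.dist_comm
              omega
        omega
  -- the pair u, v
  have hpu : eccentricity G' u ≤ max A M := by
    apply Finset.sup_le
    intro z _
    rcases hpart z with hz | hz
    · have h1 : G'.dist u z ≤ S.dist u z := hdq u z hz hune (hvnotu z hz)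
      have h2 := hAle z hz
      have h3 := le_max_left A M
      omega
    · by_cases hzv : z = v
      · rw [hzv]
        have h3 := le_max_left A M
        omega
      · have h1 : G'.dist u z ≤ S.dist v z := hdKu z hz hzv
        have h2 := hMle z hz
        have h3 := le_max_right A M
        omega
  have hpv : eccentricity G' v ≤ 1 + eccentricity G' u := by
    apply Finset.sup_le
    intro z _
    have h1 := htri' v u z
    have h2 : G'.dist v u = G'.dist u v := SimpleGraph.dist_comm
    have h3 := hecc'_ge u z
    omega
  have heu1 : A ≤ eccentricity G u := by
    have h1 := hintraU u xs (Reachable.refl u) hxsr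
    have h2 := hecc_ge u xs
    omega
  have heu2 : 1 + M ≤ eccentricity G u := by
    have h1 := hcross u ys (Reachable.refl u) hysr
    have h2 := hecc_ge u ys
    have h3 : S.dist u u = 0 := SimpleGraph.dist_self
    omega
  have hev1 : M ≤ eccentricity G v := by
    have h1 := hintraV v ys (Reachable.refl v) hysr
    have h2 := hecc_ge v ys
    omega
  have hev2 : 1 + A ≤ eccentricity G v := by
    have h1 := hcross xs v hxsr (Reachable.refl v)
    have h2 := hecc_ge v xs
    have h3 : S.dist v v = 0 := SimpleGraph.dist_self
    have h4 : G.dist v xs = G.dist xs v := SimpleGraph.dist_comm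
    have h5 : S.dist xs u = S.dist u xs := SimpleGraph.dist_comm
    omega
  -- summing up
  obtain ⟨w0, hw0u, hw0v, hw0lt⟩ := hstrict
  have hsum : ∑ w, eccentricity G' w < ∑ w, eccentricity G w := by
    have hsub : ({u, v} : Finset V) ⊆ Finset.univ := Finset.subset_univ _
    rw [← Finset.sum_sdiff hsub, ← Finset.sum_sdiff hsub]
    have hpair : ∑ w ∈ ({u, v} : Finset V), eccentricity G' w ≤
        ∑ w ∈ ({u, v} : Finset V), eccentricity G w := by
      rw [Finset.sum_pair hune, Finset.sum_pair hune]
      omega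
    have hdiff : ∑ w ∈ Finset.univ \ ({u, v} : Finset V), eccentricity G' w <
        ∑ w ∈ Finset.univ \ ({u, v} : Finset V), eccentricity G w := by
      apply Finset.sum_lt_sum
      · intro i hi
        rcases hpart i with hi2 | hi2
        · exact Finset.sup_le (fun z _ => hboundH i hi2 z)
        · have hiv : i ≠ v := by
            intro h
            rw [Finset.mem_sdiff] at hi
            exact hi.2 (by simp [h])
          exact Finset.sup_le (fun z _ => hboundK i hi2 hiv z)
      · refine ⟨w0, ?_, hw0lt⟩
        rw [Finset.mem_sdiff]
        simp [hw0u, hw0v]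
    omega
  have hcardpos : 0 < (Fintype.card V : ℝ) := by
    have : Nonempty V := hG.nonempty
    exact_mod_cast Fintype.card_pos
  have hsumR : (∑ w, (eccentricity G' w : ℝ)) < ∑ w, (eccentricity G w : ℝ) := by
    exact_mod_cast hsum
  unfold avgEcc
  exact div_lt_div_of_pos_right hsumR hcardpos
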